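/- For every α > 0, the 3×3 Jacobian matrix of partial derivatives of F evaluated at the equilibrium point K₁₋ = ((1 + α - √(α² + 10α + 1))/(2α), 0, (1-α)/α) has characteristic polynomial (X - 2/α)·(X + √(α² + 10α + 1)/α)·(X - (7α - 1 - √(α² + 10α + 1))/(2α)); equivalently its eigenvalues are 2/α, -√(α² + 10α + 1)/α, and (7α - 1 - √(α² + 10α + 1))/(2α). -/

import Mathlib

open Polynomial

/-- The vacuum form-independent dynamical system with parameter `α`, as a map on
`Fin 3 → ℝ` in coordinates `(u₁, u₄, q)`. -/
noncomputable def vacuumFormIndepField (α : ℝ) (p : Fin 3 → ℝ) : Fin 3 → ℝ :=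
  ![p 0 * (p 0 - 2 - p 2) - 2 * p 2 + 6 * (p 1)^2 - 2,
    p 1 * (2 - p 2 + p 0),
    -2 * (p 2 - (1-α)/α) * (p 2 - (2-α)/α)]

/-- The 3×3 Jacobian matrix of partial derivatives of the vacuum
form-independent dynamical system at a point `p`. -/
noncomputable def vacuumFormIndepJacobian (α : ℝ) (p : Fin 3 → ℝ) :
    Matrix (Fin 3) (Fin 3) ℝ :=
  Matrix.of fun i j =>
    deriv (fun s : ℝ => vacuumFormIndepField α (Function.update p j s) i) (p j)

theorem deriv_quad (a b c x : ℝ) : deriv (fun s : ℝ => a*s^2 + b*s + c) x = 2*a*x + b := by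
  have h : HasDerivAt (fun s : ℝ => a*s^2 + b*s + c) (a*(↑2*x^(2-1))+b*1) x :=
    (((hasDerivAt_pow 2 x).const_mul a).add ((hasDerivAt_id x).const_mul b)).add_const c
  rw [h.deriv]; push_cast; ring

theorem jac_eval (α u q : ℝ) : vacuumFormIndepJacobian α ![u, 0, q] =
    !![2*u - 2 - q, 0, -u - 2; 0, 2 - q + u, 0;
       0, 0, -2*(2*q - (1-α)/α - (2-α)/α)] := by
  ext i j
  fin_cases i <;> fin_cases j <;>
    simp only [vacuumFormIndepJacobian, vacuumFormIndepField, Matrix.of_apply,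
      Function.update_apply, Matrix.cons_val_zero, Matrix.cons_val_one, Matrix.head_cons,
      Matrix.cons_val_two, Matrix.tail_cons, Fin.ext_iff, Fin.isValue, Matrix.cons_val',
      Matrix.head_fin_const, Matrix.empty_val', Matrix.cons_val_fin_one] <;>
    norm_num <;>
    first
      | (rw [show (fun s:ℝ => u * (u - 2 - s) - 2 * s)
              = fun s => 0*s^2 + (-u-2)*s + (u*u - 2*u) from by funext s; ring, deriv_quad]; ring)
      | (rw [show (fun s:ℝ => 2 * (s - (1 - α) / α) * (s - (2 - α) / α))
              = fun s => 2*s^2 + (-2*((1 - α) / α + (2 - α) / α))*s + 2*((1 - α) / α)*((2 - α) / α)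
              from by funext s; ring, deriv_quad]; ring)
      | ring

theorem charpoly_tri (A B D E : ℝ) :
    (!![A, 0, B; 0, D, 0; 0, 0, E] : Matrix (Fin 3) (Fin 3) ℝ).charpoly =
      (X - C A) * (X - C D) * (X - C E) := by
  rw [Matrix.charpoly, Matrix.det_fin_three]
  rw [Matrix.charmatrix_apply_ne _ _ _ (by decide : (0:Fin 3) ≠ 1),
      Matrix.charmatrix_apply_ne _ _ _ (by decide : (0:Fin 3) ≠ 2),
      Matrix.charmatrix_apply_ne _ _ _ (by decide : (1:Fin 3) ≠ 0),
      Matrix.charmatrix_apply_ne _ _ _ (by decide : (1:Fin 3) ≠ 2),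
      Matrix.charmatrix_apply_ne _ _ _ (by decide : (2:Fin 3) ≠ 0),
      Matrix.charmatrix_apply_ne _ _ _ (by decide : (2:Fin 3) ≠ 1),
      Matrix.charmatrix_apply_eq, Matrix.charmatrix_apply_eq, Matrix.charmatrix_apply_eq]
  norm_num [Matrix.cons_val_zero, Matrix.cons_val_one, Matrix.head_cons,
    Matrix.cons_val_two, Matrix.tail_cons, Matrix.vecHead, Matrix.vecTail, Matrix.cons_val']

/-- For every `α > 0`, the Jacobian at the equilibrium point
`K₁₋ = ((1 + α - √(α² + 10α + 1))/(2α), 0, (1-α)/α)` has characteristic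
polynomial `(X - 2/α)(X + √(α² + 10α + 1)/α)(X - (7α - 1 - √(α² + 10α + 1))/(2α))`,
i.e. eigenvalues `2/α`, `-√(α² + 10α + 1)/α` and
`(7α - 1 - √(α² + 10α + 1))/(2α)`. -/
theorem K1_minus_jacobian_charpoly (α : ℝ) (hα : 0 < α) :
    (vacuumFormIndepJacobian α
        ![(1 + α - Real.sqrt (α^2 + 10*α + 1))/(2*α), 0, (1-α)/α]).charpoly =
      (X - C (2/α)) * (X + C (Real.sqrt (α^2 + 10*α + 1)/α)) *
        (X - C ((7*α - 1 - Real.sqrt (α^2 + 10*α + 1))/(2*α))) := by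
  have hne : α ≠ 0 := ne_of_gt hα
  set s := Real.sqrt (α^2 + 10*α + 1) with hs
  rw [jac_eval]
  have e1 : 2*((1 + α - s)/(2*α)) - 2 - (1-α)/α = -(s/α) := by field_simp; ring
  have e2 : 2 - (1-α)/α + (1 + α - s)/(2*α) = (7*α - 1 - s)/(2*α) := by field_simp; ring
  have e3 : -2*(2*((1-α)/α) - (1-α)/α - (2-α)/α) = 2/α := by field_simp; ring
  rw [e1, e2, e3, charpoly_tri, map_neg]
  ring
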